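/- Under the setup T = H V_k V_kᵀ L⁺ with k ≤ rank(L) and σ_k > 0, if τ ≥ 0 and ε ≥ 0 satisfy ‖Hx‖² ≤ τ‖Lx‖² + ε‖x‖² for all x, then the operator norm of T satisfies ‖T‖² ≤ τ + ε σ_k^{−2}, where σ_k is the k-th largest singular value of L. -/

import Mathlib

open Matrix

noncomputable def enorm {n : ℕ} (x : Fin n → ℝ) : ℝ := Real.sqrt (∑ i, x i ^ 2)

noncomputable def opNorm {m n : ℕ} (A : Matrix (Fin m) (Fin n) ℝ) : ℝ :=
  sSup {t : ℝ | ∃ x : Fin n → ℝ, _root_.enorm x ≤ 1 ∧ t = _root_.enorm (A.mulVec x)}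

noncomputable def lamMax {n : ℕ} (A : Matrix (Fin n) (Fin n) ℝ) : ℝ :=
  sSup (spectrum ℝ A)

structure SVD (m N : ℕ) (L : Matrix (Fin m) (Fin N) ℝ) where
  U : Matrix (Fin m) (Fin m) ℝ
  V : Matrix (Fin N) (Fin N) ℝ
  s : ℕ → ℝ
  hU : Uᵀ * U = 1
  hV : Vᵀ * V = 1
  hs_nonneg : ∀ j, 0 ≤ s j
  hs_anti : ∀ i j : ℕ, i ≤ j → s j ≤ s i
  hs_zero : ∀ j : ℕ, L.rank < j → s j = 0
  hL : L = U * (Matrix.of fun (i : Fin m) (j : Fin N) => if (i : ℕ) = (j : ℕ) then s ((i : ℕ) + 1) else 0) * Vᵀ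

def IsMoorePenrose {m N : ℕ} (L : Matrix (Fin m) (Fin N) ℝ)
    (Lp : Matrix (Fin N) (Fin m) ℝ) : Prop :=
  L * Lp * L = L ∧ Lp * L * Lp = Lp ∧ (L * Lp)ᵀ = L * Lp ∧ (Lp * L)ᵀ = Lp * L

def IsSelection {N r : ℕ} (S : Matrix (Fin N) (Fin r) ℝ) : Prop :=
  ∃ f : Fin r → Fin N, Function.Injective f ∧ S = Matrix.of fun i j => if i = f j then 1 else 0

noncomputable def rd (p q : ℕ) (d : ℕ → ℝ) : Matrix (Fin p) (Fin q) ℝ :=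
  Matrix.of fun i j => if (i : ℕ) = (j : ℕ) then d i else 0

lemma rd_mul (p q r : ℕ) (d₁ d₂ : ℕ → ℝ) :
    rd p q d₁ * rd q r d₂ = rd p r (fun n => if n < q then d₁ n * d₂ n else 0) := by
  ext i j
  simp only [rd, Matrix.mul_apply, Matrix.of_apply]
  rcases lt_or_ge (i : ℕ) q with h | h
  · rw [Finset.sum_eq_single (⟨i, h⟩ : Fin q)]
    · simp [h]
    · intro b _ hb
      rw [if_neg, zero_mul]
      intro hib; exact hb (Fin.ext hib.symm)
    · simp
  · rw [Finset.sum_eq_zero, eq_comm]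
    · split_ifs <;> first | omega | rfl
    · intro b _
      rw [if_neg, zero_mul]
      intro hib; omega

lemma rd_transpose (p q : ℕ) (d : ℕ → ℝ) : (rd p q d)ᵀ = rd q p d := by
  ext i j
  simp only [rd, Matrix.transpose_apply, Matrix.of_apply]
  rcases eq_or_ne (j : ℕ) (i : ℕ) with h | h
  · rw [if_pos h, if_pos h.symm, h]
  · rw [if_neg h, if_neg (Ne.symm h)]

lemma collapse {N : ℕ} {P Q : Type*} [Fintype P] [Fintype Q] [DecidableEq P] [DecidableEq Q]
    (W : Matrix (Fin N) (Fin N) ℝ) (hW : Wᵀ * W = 1)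
    (A : Matrix P (Fin N) ℝ) (B : Matrix (Fin N) Q ℝ) :
    A * Wᵀ * (W * B) = A * B := by
  rw [Matrix.mul_assoc, ← Matrix.mul_assoc Wᵀ, hW, Matrix.one_mul]

lemma ortho_ns {p q : ℕ} (A : Matrix (Fin p) (Fin q) ℝ) (hA : Aᵀ * A = 1) (z : Fin q → ℝ) :
    ∑ i, (A.mulVec z i) ^ 2 = ∑ j, z j ^ 2 := by
  have h1 : (A.mulVec z) ⬝ᵥ (A.mulVec z) = z ⬝ᵥ z := by
    rw [Matrix.dotProduct_mulVec, ← Matrix.mulVec_transpose, Matrix.mulVec_mulVec, hA,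
      Matrix.one_mulVec]
  simpa [dotProduct, sq] using h1

lemma rd_mulVec {p q : ℕ} (d : ℕ → ℝ) (z : Fin q → ℝ) (i : Fin p) :
    (rd p q d).mulVec z i = if h : (i : ℕ) < q then d i * z ⟨i, h⟩ else 0 := by
  simp only [rd, Matrix.mulVec, dotProduct, Matrix.of_apply]
  rcases lt_or_ge (i : ℕ) q with h | h
  · rw [dif_pos h, Finset.sum_eq_single (⟨i, h⟩ : Fin q)]
    · simp
    · intro b _ hb
      rw [if_neg, zero_mul]
      intro hib; exact hb (Fin.ext hib.symm)
    · simp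
  · rw [dif_neg (by omega), Finset.sum_eq_zero]
    intro b _
    rw [if_neg, zero_mul]
    intro hib; omega

lemma rd_mulVec_sq_le {p q : ℕ} (d : ℕ → ℝ) (c : ℝ) (hc : ∀ n, d n ^ 2 ≤ c) (z : Fin q → ℝ) :
    ∑ i, ((rd p q d).mulVec z i) ^ 2 ≤ c * ∑ j, z j ^ 2 := by
  have hc0 : 0 ≤ c := le_trans (sq_nonneg (d 0)) (hc 0)
  set G : ℕ → ℝ := fun n => if h : n < q then c * z ⟨n, h⟩ ^ 2 else 0 with hG
  have hGnn : ∀ n, 0 ≤ G n := by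
    intro n; simp only [hG]; split
    · exact mul_nonneg hc0 (sq_nonneg _)
    · exact le_refl 0
  have step1 : ∑ i, ((rd p q d).mulVec z i) ^ 2 ≤ ∑ i : Fin p, G i := by
    apply Finset.sum_le_sum
    intro i _
    rw [rd_mulVec]
    simp only [hG]
    split
    · rw [mul_pow]
      exact mul_le_mul_of_nonneg_right (hc _) (sq_nonneg _)
    · simp
  have step2 : ∑ i : Fin p, G (i : ℕ) = ∑ n ∈ Finset.range p, G n := Fin.sum_univ_eq_sum_range G p
  have step3 : ∑ n ∈ Finset.range p, G n ≤ ∑ n ∈ Finset.range q, G n := by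
    rw [show ∑ n ∈ Finset.range p, G n = ∑ n ∈ Finset.range (min p q), G n by
      refine (Finset.sum_subset (by simp [Finset.range_subset]; omega) ?_).symm
      intro n hn hn2
      simp only [Finset.mem_range] at hn hn2
      simp only [hG]
      rw [dif_neg (by omega)]]
    exact Finset.sum_le_sum_of_subset_of_nonneg (by simp [Finset.range_subset])
      (fun n _ _ => hGnn n)
  have step4 : ∑ n ∈ Finset.range q, G n = c * ∑ j, z j ^ 2 := by
    rw [← Fin.sum_univ_eq_sum_range G q, Finset.mul_sum]
    apply Finset.sum_congr rfl
    intro j _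
    simp [hG]
  calc ∑ i, ((rd p q d).mulVec z i) ^ 2 ≤ ∑ i : Fin p, G i := step1
    _ = ∑ n ∈ Finset.range p, G n := step2
    _ ≤ ∑ n ∈ Finset.range q, G n := step3
    _ = c * ∑ j, z j ^ 2 := step4

lemma collapse' {N : ℕ} {Q : Type*} [Fintype Q]
    (W : Matrix (Fin N) (Fin N) ℝ) (hW : Wᵀ * W = 1) (B : Matrix (Fin N) Q ℝ) :
    Wᵀ * (W * B) = B := by
  rw [← Matrix.mul_assoc, hW, Matrix.one_mul]

lemma enorm_sq {n : ℕ} (x : Fin n → ℝ) : _root_.enorm x ^ 2 = ∑ i, x i ^ 2 :=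
  Real.sq_sqrt (Finset.sum_nonneg fun i _ => sq_nonneg _)

lemma enorm_nonneg' {n : ℕ} (x : Fin n → ℝ) : 0 ≤ _root_.enorm x := Real.sqrt_nonneg _

theorem stmt5 {M m N k : ℕ} (H : Matrix (Fin M) (Fin N) ℝ) (L : Matrix (Fin m) (Fin N) ℝ)
    (svd : SVD m N L) (hk : k ≤ L.rank) (hkN : k ≤ N) (hσk : 0 < svd.s k)
    (Lp : Matrix (Fin N) (Fin m) ℝ) (hLp : IsMoorePenrose L Lp)
    (τ ε : ℝ) (hτ : 0 ≤ τ) (hε : 0 ≤ ε)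
    (hτε : ∀ x : Fin N → ℝ,
      _root_.enorm (H.mulVec x) ^ 2 ≤ τ * _root_.enorm (L.mulVec x) ^ 2 + ε * _root_.enorm x ^ 2) :
    let Vk : Matrix (Fin N) (Fin k) ℝ := svd.V.submatrix id (Fin.castLE hkN)
    let T : Matrix (Fin M) (Fin m) ℝ := H * (Vk * Vkᵀ) * Lp
    opNorm T ^ 2 ≤ τ + ε * (svd.s k)⁻¹ ^ 2 := by
  intro Vk T
  obtain ⟨U, V, s, hU, hV, hs_nonneg, hs_anti, hs_zero, hL⟩ := svd
  simp only at *
  -- basic facts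
  have hkm : k ≤ m := hk.trans ((Matrix.rank_le_card_height L).trans (by simp))
  have hUU : U * Uᵀ = 1 := mul_eq_one_comm.mp hU
  have hs_pos : ∀ n : ℕ, n < k → 0 < s (n + 1) :=
    fun n hn => lt_of_lt_of_le hσk (hs_anti (n + 1) k (by omega))
  -- named rectangular diagonal matrices
  set Sig : Matrix (Fin m) (Fin N) ℝ := rd m N (fun n => s (n + 1)) with hSig
  set Sp : Matrix (Fin N) (Fin m) ℝ := rd N m (fun n => (s (n + 1))⁻¹) with hSp
  set Pk : Matrix (Fin N) (Fin N) ℝ := rd N N (fun n => if n < k then 1 else 0) with hPk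
  set J : Matrix (Fin N) (Fin k) ℝ := rd N k (fun _ => 1) with hJ
  have hL' : L = U * (Sig * Vᵀ) := by rw [hL, Matrix.mul_assoc]; rfl
  set Lp' : Matrix (Fin N) (Fin m) ℝ := V * (Sp * Uᵀ) with hLp'
  -- Vk = V * J
  have hVkJ : Vk = V * J := by
    ext i a
    show V i (Fin.castLE hkN a) = _
    rw [Matrix.mul_apply]
    rw [Finset.sum_eq_single (Fin.castLE hkN a)]
    · simp [hJ, rd]
    · intro b _ hb
      rw [hJ]
      show V i b * (if (b : ℕ) = (a : ℕ) then (1:ℝ) else 0) = 0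
      rw [if_neg, mul_zero]
      intro hba; exact hb (Fin.ext hba)
    · simp
  have hP : Vk * Vkᵀ = V * (Pk * Vᵀ) := by
    rw [hVkJ, Matrix.transpose_mul, Matrix.mul_assoc, ← Matrix.mul_assoc J, hJ, rd_transpose,
      rd_mul]
    congr 2
    · funext n
      by_cases h : n < k <;> simp [hPk, rd, h]
  -- e1 : L * Lp' = U * (rdE * Uᵀ)
  set eE : ℕ → ℝ := fun n => if n < N then s (n + 1) * (s (n + 1))⁻¹ else 0 with heE
  have e1 : L * Lp' = U * (rd m m eE * Uᵀ) := by
    rw [hL', hLp']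
    simp only [Matrix.mul_assoc]
    rw [collapse' V hV, ← Matrix.mul_assoc Sig Sp, hSig, hSp, rd_mul]
  have e1sym : (L * Lp')ᵀ = L * Lp' := by
    rw [e1]
    simp [Matrix.transpose_mul, Matrix.transpose_transpose, rd_transpose, Matrix.mul_assoc]
  -- Lp' * L
  set fF : ℕ → ℝ := fun n => if n < m then (s (n + 1))⁻¹ * s (n + 1) else 0 with hfF
  have eLpL : Lp' * L = V * (rd N N fF * Vᵀ) := by
    rw [hL', hLp']
    simp only [Matrix.mul_assoc]
    rw [collapse' U hU, ← Matrix.mul_assoc Sp Sig, hSig, hSp, rd_mul]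
  -- e2 : L * (Lp' * L) = L
  have hSigF : Sig * rd N N fF = Sig := by
    rw [hSig, rd_mul]
    ext i j
    simp only [rd, Matrix.of_apply, hfF]
    rcases eq_or_ne (i : ℕ) (j : ℕ) with h | h
    · simp only [if_pos h]
      have h2 : (i : ℕ) < N := h ▸ j.isLt
      have h4 : (i : ℕ) < m := i.isLt
      rcases eq_or_ne (s ((i : ℕ) + 1)) 0 with h0 | h0
      · simp [h2, h4, h0]
      · simp [h2, h4, inv_mul_cancel₀ h0]
    · simp [h]
  have e2 : L * (Lp' * L) = L := by
    rw [eLpL, hL']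
    simp only [Matrix.mul_assoc]
    rw [collapse' V hV, ← Matrix.mul_assoc Sig, hSigF]
  -- e3 : Lp' * (L * Lp') = Lp'
  have hSpE : Sp * rd m m eE = Sp := by
    rw [hSp, rd_mul]
    ext i j
    simp only [rd, Matrix.of_apply, heE]
    rcases eq_or_ne (i : ℕ) (j : ℕ) with h | h
    · simp only [if_pos h]
      have h2 : (i : ℕ) < N := i.isLt
      have h4 : (i : ℕ) < m := h ▸ j.isLt
      rcases eq_or_ne (s ((i : ℕ) + 1)) 0 with h0 | h0
      · simp [h2, h4, h0]
      · simp [h2, h4, mul_inv_cancel₀ h0]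
    · simp [h]
  have e3 : Lp' * (L * Lp') = Lp' := by
    rw [e1, hLp']
    simp only [Matrix.mul_assoc]
    rw [collapse' U hU, ← Matrix.mul_assoc Sp, hSpE]
  -- e4 : (Vk * Vkᵀ) * (Lp' * L) = Vk * Vkᵀ
  have hPkF : Pk * rd N N fF = Pk := by
    rw [hPk, rd_mul]
    ext i j
    simp only [rd, Matrix.of_apply, hfF]
    rcases eq_or_ne (i : ℕ) (j : ℕ) with h | h
    · simp only [if_pos h]
      have h2 : (i : ℕ) < N := i.isLt
      by_cases h3 : (i : ℕ) < k
      · have h4 : (i : ℕ) < m := lt_of_lt_of_le h3 hkm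
        have h5 := (hs_pos i h3).ne'
        simp [h2, h3, h4, inv_mul_cancel₀ h5]
      · simp [h2, h3]
    · simp [h]
  have e4 : (Vk * Vkᵀ) * (Lp' * L) = Vk * Vkᵀ := by
    rw [hP, eLpL]
    simp only [Matrix.mul_assoc]
    rw [collapse' V hV, ← Matrix.mul_assoc Pk, hPkF]
  -- e5 : L * Lp = L * Lp'
  have ea : L * Lp' = (L * Lp) * (L * Lp') := by
    conv_lhs => rw [← hLp.1]
    rw [Matrix.mul_assoc]
  have eb : L * Lp = (L * Lp') * (L * Lp) := by
    conv_lhs => rw [← e2]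
    simp only [Matrix.mul_assoc]
  have ec : L * Lp = (L * Lp) * (L * Lp') :=
    calc L * Lp = (L * Lp)ᵀ := (hLp.2.2.1).symm
      _ = ((L * Lp') * (L * Lp))ᵀ := by rw [← eb]
      _ = (L * Lp)ᵀ * (L * Lp')ᵀ := Matrix.transpose_mul _ _
      _ = (L * Lp) * (L * Lp') := by rw [hLp.2.2.1, e1sym]
  have e5 : L * Lp = L * Lp' := ec.trans ea.symm
  -- e6
  have e6 : (Vk * Vkᵀ) * Lp = (Vk * Vkᵀ) * Lp' :=
    calc (Vk * Vkᵀ) * Lp = ((Vk * Vkᵀ) * (Lp' * L)) * Lp := by rw [e4]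
      _ = (Vk * Vkᵀ) * (Lp' * (L * Lp)) := by simp only [Matrix.mul_assoc]
      _ = (Vk * Vkᵀ) * (Lp' * (L * Lp')) := by rw [e5]
      _ = (Vk * Vkᵀ) * Lp' := by rw [e3]
  -- e7
  set dk : ℕ → ℝ := fun n => if n < N then (if n < k then (1:ℝ) else 0) * (s (n + 1))⁻¹ else 0
    with hdk
  have e7 : (Vk * Vkᵀ) * Lp' = V * (rd N m dk * Uᵀ) := by
    rw [hP, hLp']
    simp only [Matrix.mul_assoc]
    rw [collapse' V hV, ← Matrix.mul_assoc Pk Sp, hPk, hSp, rd_mul]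
  -- e8
  set gG : ℕ → ℝ := fun n => if n < N then s (n + 1) * dk n else 0 with hgG
  have e8 : L * ((Vk * Vkᵀ) * Lp') = U * (rd m m gG * Uᵀ) := by
    rw [e7, hL']
    simp only [Matrix.mul_assoc]
    rw [collapse' V hV, ← Matrix.mul_assoc Sig (rd N m dk), hSig, rd_mul]
  -- T rewritten
  have hT : T = H * ((Vk * Vkᵀ) * Lp') := by
    show H * (Vk * Vkᵀ) * Lp = _
    rw [Matrix.mul_assoc, e6]
  -- bounds on the diagonal functions
  have hdk_sq : ∀ n, dk n ^ 2 ≤ ((s k)⁻¹) ^ 2 := by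
    intro n
    rw [hdk]
    by_cases h1 : n < N
    · by_cases h2 : n < k
      · simp only [if_pos h1, if_pos h2, one_mul]
        have hp := hs_pos n h2
        have hle : (s (n + 1))⁻¹ ≤ (s k)⁻¹ :=
          inv_anti₀ hσk (hs_anti (n + 1) k (by omega))
        exact pow_le_pow_left₀ (inv_nonneg.mpr hp.le) hle 2
      · simp [h1, h2, sq_nonneg]
    · simp [h1, sq_nonneg]
  have hgG_sq : ∀ n, gG n ^ 2 ≤ 1 := by
    intro n
    rw [hgG, hdk]
    by_cases h1 : n < N
    · by_cases h2 : n < k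
      · simp only [if_pos h1, if_pos h2, one_mul]
        rw [mul_inv_cancel₀ (hs_pos n h2).ne']
        norm_num
      · simp [h1, h2]
    · simp [h1]
  -- key bound
  have key : ∀ y : Fin m → ℝ, _root_.enorm y ≤ 1 →
      _root_.enorm (T.mulVec y) ^ 2 ≤ τ + ε * ((s k)⁻¹) ^ 2 := by
    intro y hy
    have hy2 : ∑ i, y i ^ 2 ≤ 1 := by
      rw [← enorm_sq]
      exact pow_le_one₀ (enorm_nonneg' y) hy
    set u : Fin m → ℝ := Uᵀ.mulVec y with hu
    have hUUt : (Uᵀ)ᵀ * Uᵀ = 1 := by rw [Matrix.transpose_transpose]; exact hUU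
    have hu2 : ∑ i, u i ^ 2 = ∑ i, y i ^ 2 := ortho_ns Uᵀ hUUt y
    set x : Fin N → ℝ := ((Vk * Vkᵀ) * Lp').mulVec y with hx
    have hxV : x = V.mulVec ((rd N m dk).mulVec u) := by
      rw [hx, e7, hu, Matrix.mulVec_mulVec, Matrix.mulVec_mulVec, Matrix.mul_assoc]
    have hx2 : ∑ i, x i ^ 2 ≤ ((s k)⁻¹) ^ 2 := by
      rw [hxV, ortho_ns V hV]
      calc ∑ i, ((rd N m dk).mulVec u i) ^ 2 ≤ ((s k)⁻¹) ^ 2 * ∑ i, u i ^ 2 :=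
            rd_mulVec_sq_le dk _ hdk_sq u
        _ = ((s k)⁻¹) ^ 2 * ∑ i, y i ^ 2 := by rw [hu2]
        _ ≤ ((s k)⁻¹) ^ 2 * 1 := by
            exact mul_le_mul_of_nonneg_left hy2 (sq_nonneg _)
        _ = ((s k)⁻¹) ^ 2 := mul_one _
    have hLx : L.mulVec x = U.mulVec ((rd m m gG).mulVec u) := by
      rw [hx, Matrix.mulVec_mulVec, e8, hu, ← Matrix.mulVec_mulVec, ← Matrix.mulVec_mulVec]
    have hLx2 : ∑ i, (L.mulVec x i) ^ 2 ≤ 1 := by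
      rw [hLx, ortho_ns U hU]
      calc ∑ i, ((rd m m gG).mulVec u i) ^ 2 ≤ 1 * ∑ i, u i ^ 2 :=
            rd_mulVec_sq_le gG 1 hgG_sq u
        _ = ∑ i, y i ^ 2 := by rw [one_mul, hu2]
        _ ≤ 1 := hy2
    have hTy : T.mulVec y = H.mulVec x := by
      rw [hT, hx, ← Matrix.mulVec_mulVec]
    calc _root_.enorm (T.mulVec y) ^ 2 = _root_.enorm (H.mulVec x) ^ 2 := by rw [hTy]
      _ ≤ τ * _root_.enorm (L.mulVec x) ^ 2 + ε * _root_.enorm x ^ 2 := hτε x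
      _ ≤ τ * 1 + ε * ((s k)⁻¹) ^ 2 := by
          have g1 : _root_.enorm (L.mulVec x) ^ 2 ≤ 1 := by rw [enorm_sq]; exact hLx2
          have g2 : _root_.enorm x ^ 2 ≤ ((s k)⁻¹) ^ 2 := by rw [enorm_sq]; exact hx2
          exact add_le_add (mul_le_mul_of_nonneg_left g1 hτ)
            (mul_le_mul_of_nonneg_left g2 hε)
      _ = τ + ε * ((s k)⁻¹) ^ 2 := by ring
  -- final sSup argument
  set C : ℝ := τ + ε * ((s k)⁻¹) ^ 2 with hC
  have hC0 : 0 ≤ C := add_nonneg hτ (mul_nonneg hε (sq_nonneg _))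
  set S : Set ℝ := {t : ℝ | ∃ y : Fin m → ℝ, _root_.enorm y ≤ 1 ∧ t = _root_.enorm (T.mulVec y)} with hSdef
  have h0S : (0 : ℝ) ∈ S := by
    refine ⟨0, by simp [_root_.enorm], ?_⟩
    simp [_root_.enorm, Matrix.mulVec_zero]
  have hub : ∀ t ∈ S, t ≤ Real.sqrt C := by
    rintro t ⟨y, hy, rfl⟩
    have h1 := key y hy
    calc _root_.enorm (T.mulVec y) = Real.sqrt (_root_.enorm (T.mulVec y) ^ 2) :=
          (Real.sqrt_sq (enorm_nonneg' _)).symm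
      _ ≤ Real.sqrt C := Real.sqrt_le_sqrt h1
  have hle : opNorm T ≤ Real.sqrt C := csSup_le ⟨0, h0S⟩ hub
  have hge : (0 : ℝ) ≤ opNorm T := le_csSup ⟨Real.sqrt C, fun t ht => hub t ht⟩ h0S
  calc opNorm T ^ 2 ≤ Real.sqrt C ^ 2 := pow_le_pow_left₀ hge hle 2
    _ = C := Real.sq_sqrt hC0
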